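/- Let G be a finitely generated virtually abelian group. Then G is bi-orderable if and only if G is free abelian. -/

import Mathlib

/-- A finitely generated virtually abelian group is bi-orderable if and only if
it is free abelian. -/
theorem fg_virtually_abelian_biorderable_iff_free_abelian
    {G : Type*} [Group G] (hfg : Group.FG G)
    (H : Subgroup G) (hH : H.FiniteIndex) (hcomm : ∀ a b : H, a * b = b * a) :
    (∃ _ : LinearOrder G,
        (∀ a b c : G, a ≤ b → c * a ≤ c * b) ∧ (∀ a b c : G, a ≤ b → a * c ≤ b * c)) ↔
      ∃ n : ℕ, Nonempty (G ≃* Multiplicative (Fin n → ℤ)) := by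
  constructor
  · rintro ⟨lo, hl, hr⟩
    letI := lo
    -- strict versions of translation invariance
    have hls : ∀ a b c : G, a < b → c * a < c * b := by
      intro a b c hab
      refine lt_of_le_of_ne (hl _ _ _ hab.le) fun h => hab.ne (mul_left_cancel h)
    have hrs : ∀ a b c : G, a < b → a * c < b * c := by
      intro a b c hab
      refine lt_of_le_of_ne (hr _ _ _ hab.le) fun h => hab.ne (mul_right_cancel h)
    -- strict monotonicity of powers
    have hpow : ∀ (a b : G) (n : ℕ), a < b → a ^ (n + 1) < b ^ (n + 1) := by
      intro a b n hab
      induction n with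
      | zero => simpa using hab
      | succ n ih =>
        calc a ^ (n + 2) = a ^ (n + 1) * a := pow_succ _ _
          _ < b ^ (n + 1) * a := hrs _ _ _ ih
          _ < b ^ (n + 1) * b := hls _ _ _ hab
          _ = b ^ (n + 2) := (pow_succ _ _).symm
    -- unique roots
    have hroot : ∀ (a b : G) (n : ℕ), n ≠ 0 → a ^ n = b ^ n → a = b := by
      intro a b n hn h
      obtain ⟨m, rfl⟩ := Nat.exists_eq_succ_of_ne_zero hn
      rcases lt_trichotomy a b with h' | h' | h'
      · exact absurd h (hpow a b m h').ne
      · exact h'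
      · exact absurd h.symm (hpow b a m h').ne
    -- pass to the normal core of H
    set K := H.normalCore with hKdef
    haveI : K.FiniteIndex := Subgroup.finiteIndex_normalCore H
    have hKle : K ≤ H := Subgroup.normalCore_le H
    have hn : K.index ≠ 0 := Subgroup.FiniteIndex.index_ne_zero
    have hmem : ∀ g : G, g ^ K.index ∈ K := fun g => Subgroup.pow_index_mem K g
    -- commuting with a power implies commuting
    have comm1 : ∀ x y : G, x * y ^ K.index = y ^ K.index * x → x * y = y * x := by
      intro x y h
      have hconj : (x * y * x⁻¹) ^ K.index = y ^ K.index := by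
        rw [conj_pow, mul_inv_eq_iff_eq_mul, h]
      have := hroot _ _ _ hn hconj
      have : x * y * x⁻¹ * x = y * x := by rw [this]
      simpa using this
    -- G is commutative
    have hc : ∀ x y : G, x * y = y * x := by
      intro x y
      have h1 : x ^ K.index * y ^ K.index = y ^ K.index * x ^ K.index := by
        have := hcomm ⟨x ^ K.index, hKle (hmem x)⟩ ⟨y ^ K.index, hKle (hmem y)⟩
        exact Subtype.ext_iff.mp this
      have h2 : x ^ K.index * y = y * x ^ K.index := comm1 _ _ h1
      have h3 := comm1 y x h2.symm
      exact h3.symm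
    letI : CommGroup G := { ‹Group G› with mul_comm := hc }
    -- torsion freeness
    have htf : IsAddTorsionFree (Additive G) := by
      refine ⟨fun m hm g g' hgm => ?_⟩
      have : (Additive.toMul g) ^ m = (Additive.toMul g') ^ m := hgm
      have := hroot _ _ m hm this
      exact this
    haveI : AddGroup.FG (Additive G) := GroupFG.iff_add_fg.mp hfg
    haveI : Module.Finite ℤ (Additive G) := Module.Finite.iff_addGroup_fg.mpr ‹_›
    haveI : NoZeroSMulDivisors ℤ (Additive G) := IsAddTorsionFree.to_noZeroSMulDivisors_int
    haveI : Module.Free ℤ (Additive G) := inferInstance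
    let b := Module.Free.chooseBasis ℤ (Additive G)
    refine ⟨Fintype.card (Module.Free.ChooseBasisIndex ℤ (Additive G)), ⟨?_⟩⟩
    let e := (b.reindex (Fintype.equivFin _)).equivFun
    exact (MulEquiv.multiplicativeAdditive G).symm.trans
      (AddEquiv.toMultiplicative e.toAddEquiv)
  · rintro ⟨n, ⟨e⟩⟩
    letI instLO : LinearOrder (Lex (Fin n → ℤ)) := inferInstance
    let f : G → Lex (Fin n → ℤ) := fun g => toLex (Multiplicative.toAdd (e g))
    have hf : Function.Injective f := by
      intro a b h
      exact e.injective (by simpa [f] using h)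
    have hfm : ∀ a b : G, f (a * b) = f a + f b := by
      intro a b
      simp only [f, map_mul]
      rfl
    have hGcomm : ∀ a b : G, a * b = b * a := by
      intro a b
      apply e.injective
      rw [map_mul, map_mul, mul_comm]
    letI : LinearOrder G := @LinearOrder.lift' G (Lex (Fin n → ℤ)) instLO f hf
    have hle : ∀ a b : G, a ≤ b ↔ f a ≤ f b := fun a b => Iff.rfl
    have key : ∀ x y z : Lex (Fin n → ℤ), x ≤ y → z + x ≤ z + y := fun x y z h => by
      gcongr
    refine ⟨inferInstance, ?_, ?_⟩
    · intro a b c hab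
      rw [hle] at hab ⊢
      rw [hfm, hfm]
      exact key _ _ _ hab
    · intro a b c hab
      rw [hle] at hab ⊢
      rw [hGcomm a c, hGcomm b c, hfm, hfm]
      exact key _ _ _ hab
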